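/- Let H be a real inner product space, P ≥ 1, let w_1,…,w_P ≥ 0 with Σ_p w_p = 1, let G ≥ 0, let E ≥ 1 be a natural number, and let (α_s)_{s ≥ 1} be a non-increasing sequence of nonnegative step sizes. For each p, let (δ_p^s)_{s ≥ 1} be a sequence in H evolving by δ_p^{s+1} = δ_p^s − α_s g_p^s with ‖g_p^s‖ ≤ G for all s. Suppose there exist integers t_0 ≤ t with t − t_0 ≤ E − 1 such that all δ_p^{t_0} are equal (the sequences are synchronized at step t_0) and α_{t_0} ≤ 2 α_t. Then Σ_{p=1}^P w_p ‖δ̄^t − δ_p^t‖² ≤ 4 α_t² (E − 1)² G², where δ̄^t = Σ_{p=1}^P w_p δ_p^t. -/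

import Mathlib

/-- Divergence-bounding lemma: local iterates `δ p` evolving by gradient steps
with non-increasing step sizes and gradients bounded by `G`, synchronized at a
step `t₀` with `t − t₀ ≤ E − 1` and `α t₀ ≤ 2 α t`, have weighted spread around
their weighted average bounded by `4 α_t² (E − 1)² G²`. -/
theorem divergence_bound {H : Type*} [NormedAddCommGroup H] [InnerProductSpace ℝ H]
    (P : ℕ) (hP : 1 ≤ P)
    (w : Fin P → ℝ) (hw : ∀ p, 0 ≤ w p) (hwsum : ∑ p, w p = 1)
    (G : ℝ) (hG : 0 ≤ G) (E : ℕ) (hE : 1 ≤ E)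
    (α : ℕ → ℝ) (hα0 : ∀ s : ℕ, 1 ≤ s → 0 ≤ α s)
    (hαmono : ∀ s t : ℕ, 1 ≤ s → s ≤ t → α t ≤ α s)
    (δ : Fin P → ℕ → H) (g : Fin P → ℕ → H)
    (hstep : ∀ (p : Fin P) (s : ℕ), 1 ≤ s → δ p (s + 1) = δ p s - α s • g p s)
    (hgbound : ∀ (p : Fin P) (s : ℕ), 1 ≤ s → ‖g p s‖ ≤ G)
    (t₀ t : ℕ) (ht₀ : 1 ≤ t₀) (ht₀t : t₀ ≤ t) (htE : t - t₀ ≤ E - 1)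
    (hsync : ∀ p q : Fin P, δ p t₀ = δ q t₀)
    (hαt : α t₀ ≤ 2 * α t) :
    ∑ p, w p * ‖(∑ q, w q • δ q t) - δ p t‖ ^ 2
      ≤ 4 * (α t) ^ 2 * ((E : ℝ) - 1) ^ 2 * G ^ 2 := by
  have hαt0 : 0 ≤ α t := hα0 t (le_trans ht₀ ht₀t)
  have hαt₀0 : 0 ≤ α t₀ := hα0 t₀ ht₀
  -- Step 1: distance traveled from t₀
  have key : ∀ (p : Fin P) (u : ℕ), t₀ ≤ u →
      ‖δ p u - δ p t₀‖ ≤ ((u - t₀ : ℕ) : ℝ) * (α t₀ * G) := by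
    intro p u hu
    induction u, hu using Nat.le_induction with
    | base => simp
    | succ u hu ih =>
      have h1u : 1 ≤ u := le_trans ht₀ hu
      have hrw : δ p (u + 1) - δ p t₀ = (δ p u - δ p t₀) - α u • g p u := by
        rw [hstep p u h1u]; abel
      have hstepnorm : ‖α u • g p u‖ ≤ α t₀ * G := by
        rw [norm_smul, Real.norm_eq_abs, abs_of_nonneg (hα0 u h1u)]
        exact mul_le_mul (hαmono t₀ u ht₀ hu) (hgbound p u h1u) (norm_nonneg _) hαt₀0
      calc ‖δ p (u + 1) - δ p t₀‖ ≤ ‖δ p u - δ p t₀‖ + ‖α u • g p u‖ := by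
            rw [hrw]; exact norm_sub_le _ _
        _ ≤ ((u - t₀ : ℕ) : ℝ) * (α t₀ * G) + α t₀ * G := add_le_add ih hstepnorm
        _ = ((u + 1 - t₀ : ℕ) : ℝ) * (α t₀ * G) := by
            rw [Nat.sub_add_comm hu, Nat.cast_add, Nat.cast_one]; ring
  set B : ℝ := 2 * α t * ((E : ℝ) - 1) * G with hB
  have hE1 : (0 : ℝ) ≤ (E : ℝ) - 1 := by
    have : (1 : ℝ) ≤ (E : ℝ) := by exact_mod_cast hE
    linarith
  have hB0 : 0 ≤ B := by
    rw [hB]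
    exact mul_nonneg (mul_nonneg (by linarith) hE1) hG
  have hbound : ∀ p : Fin P, ‖δ p t - δ p t₀‖ ≤ B := by
    intro p
    have h1 := key p t ht₀t
    have h2 : ((t - t₀ : ℕ) : ℝ) ≤ (E : ℝ) - 1 := by
      have : ((t - t₀ : ℕ) : ℝ) ≤ ((E - 1 : ℕ) : ℝ) := by exact_mod_cast htE
      rwa [Nat.cast_sub hE, Nat.cast_one] at this
    calc ‖δ p t - δ p t₀‖ ≤ ((t - t₀ : ℕ) : ℝ) * (α t₀ * G) := h1
      _ ≤ ((E : ℝ) - 1) * (2 * α t * G) := by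
          apply mul_le_mul h2 (mul_le_mul_of_nonneg_right hαt hG)
            (by positivity) hE1
      _ = B := by ring
  -- the common point
  set c : H := δ ⟨0, hP⟩ t₀ with hc
  have hcp : ∀ p : Fin P, δ p t₀ = c := fun p => hsync p ⟨0, hP⟩
  set d : H := ∑ q, w q • δ q t with hd
  -- variance inequality
  have hzero : ∑ p, w p • (d - δ p t) = 0 := by
    rw [Finset.sum_congr rfl (fun p _ => smul_sub (w p) d (δ p t)),
      Finset.sum_sub_distrib, ← Finset.sum_smul, hwsum, one_smul]
    simp [hd]
  have hvar : ∑ p, w p * ‖d - δ p t‖ ^ 2 ≤ ∑ p, w p * ‖c - δ p t‖ ^ 2 := by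
    have expand : ∀ p : Fin P, ‖c - δ p t‖ ^ 2
        = ‖c - d‖ ^ 2 + 2 * inner ℝ (c - d) (d - δ p t) + ‖d - δ p t‖ ^ 2 := by
      intro p
      have : c - δ p t = (c - d) + (d - δ p t) := by abel
      rw [this, @norm_add_sq_real]
    have : ∑ p, w p * ‖c - δ p t‖ ^ 2
        = ‖c - d‖ ^ 2 + 2 * inner ℝ (c - d) (∑ p, w p • (d - δ p t))
          + ∑ p, w p * ‖d - δ p t‖ ^ 2 := by
      rw [inner_sum]
      simp only [expand, mul_add, Finset.sum_add_distrib, real_inner_smul_right]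
      rw [← Finset.sum_mul, hwsum, one_mul, Finset.mul_sum]
      congr 1
      congr 1
      exact Finset.sum_congr rfl (fun x _ => by ring)
    rw [this, hzero, inner_zero_right]
    have : (0:ℝ) ≤ ‖c - d‖ ^ 2 := by positivity
    linarith
  have hfinal : ∑ p, w p * ‖c - δ p t‖ ^ 2 ≤ B ^ 2 := by
    calc ∑ p, w p * ‖c - δ p t‖ ^ 2 ≤ ∑ p, w p * B ^ 2 := by
          apply Finset.sum_le_sum
          intro p _
          apply mul_le_mul_of_nonneg_left _ (hw p)
          have : ‖c - δ p t‖ = ‖δ p t - δ p t₀‖ := by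
            rw [← hcp p, norm_sub_rev]
          rw [this]
          exact pow_le_pow_left₀ (norm_nonneg _) (hbound p) 2
      _ = B ^ 2 := by rw [← Finset.sum_mul, hwsum, one_mul]
  calc ∑ p, w p * ‖(∑ q, w q • δ q t) - δ p t‖ ^ 2 ≤ B ^ 2 := le_trans hvar hfinal
    _ = 4 * (α t) ^ 2 * ((E : ℝ) - 1) ^ 2 * G ^ 2 := by rw [hB]; ring
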